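/- Let N ≥ 1 and let R^{ij}_{kl} ∈ ℂ be regarded as an N²×N² matrix with row index (i,j) and column index (k,l). Let (g^{ij}) be an invertible N×N complex matrix and let g̃ be its inverse transpose, so that g^{ik} g̃_{jk} = δ^i_j = g^{ki} g̃_{kj}. Assume the four crossing relations: g^{ij} δ^k_l = R^{jk}_{np} R^{ip}_{ml} g^{mn}; δ^i_j g̃_{kl} = g̃_{mn} R^{mi}_{kp} R^{np}_{lj}; g^{ij} δ^k_l = R^{ki}_{pm} R^{pj}_{ln} g^{mn}; δ^i_j g̃_{kl} = g̃_{mn} R^{in}_{pl} R^{pm}_{jk}. Then R is invertible as an N²×N² matrix and its inverse is given by (R⁻¹)^{ij}_{kl} = g^{mi} R^{nj}_{ml} g̃_{nk} = g^{jm} R^{in}_{km} g̃_{ln}. -/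

import Mathlib

open Finset

private lemma rot4 {N : ℕ} (f : Fin N → Fin N → Fin N → Fin N → ℂ) :
    ∑ a, ∑ b, ∑ c, ∑ d, f a b c d = ∑ d, ∑ a, ∑ b, ∑ c, f a b c d := by
  calc ∑ a, ∑ b, ∑ c, ∑ d, f a b c d
      = ∑ a, ∑ b, ∑ d, ∑ c, f a b c d :=
        Finset.sum_congr rfl fun _ _ => Finset.sum_congr rfl fun _ _ => Finset.sum_comm
    _ = ∑ a, ∑ d, ∑ b, ∑ c, f a b c d :=
        Finset.sum_congr rfl fun _ _ => Finset.sum_comm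
    _ = ∑ d, ∑ a, ∑ b, ∑ c, f a b c d := Finset.sum_comm

theorem stmt9 (N : ℕ) (hN : 1 ≤ N)
    (R : Fin N → Fin N → Fin N → Fin N → ℂ) (g gt : Fin N → Fin N → ℂ)
    (hg : ∀ i j : Fin N, ∑ k, g i k * gt j k = if i = j then (1 : ℂ) else 0)
    (hg' : ∀ i j : Fin N, ∑ k, g k i * gt k j = if i = j then (1 : ℂ) else 0)
    (hc1 : ∀ i j k l : Fin N,
      g i j * (if k = l then (1 : ℂ) else 0) = ∑ n, ∑ p, ∑ m, R j k n p * R i p m l * g m n)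
    (hc2 : ∀ i j k l : Fin N,
      (if i = j then (1 : ℂ) else 0) * gt k l = ∑ m, ∑ n, ∑ p, gt m n * R m i k p * R n p l j)
    (hc3 : ∀ i j k l : Fin N,
      g i j * (if k = l then (1 : ℂ) else 0) = ∑ p, ∑ m, ∑ n, R k i p m * R p j l n * g m n)
    (hc4 : ∀ i j k l : Fin N,
      (if i = j then (1 : ℂ) else 0) * gt k l = ∑ m, ∑ n, ∑ p, gt m n * R i n p l * R p m j k) :
    letI M : Matrix (Fin N × Fin N) (Fin N × Fin N) ℂ := fun p q => R p.1 p.2 q.1 q.2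
    letI A : Matrix (Fin N × Fin N) (Fin N × Fin N) ℂ :=
      fun p q => ∑ m, ∑ n, g m p.1 * R n p.2 m q.2 * gt n q.1
    letI B : Matrix (Fin N × Fin N) (Fin N × Fin N) ℂ :=
      fun p q => ∑ m, ∑ n, g p.2 m * R p.1 n q.1 m * gt q.2 n
    M * A = 1 ∧ A * M = 1 ∧ A = B := by

  set M : Matrix (Fin N × Fin N) (Fin N × Fin N) ℂ := fun p q => R p.1 p.2 q.1 q.2 with hMdef
  set A : Matrix (Fin N × Fin N) (Fin N × Fin N) ℂ :=
    fun p q => ∑ m, ∑ n, g m p.1 * R n p.2 m q.2 * gt n q.1 with hAdef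
  set B : Matrix (Fin N × Fin N) (Fin N × Fin N) ℂ :=
    fun p q => ∑ m, ∑ n, g p.2 m * R p.1 n q.1 m * gt q.2 n with hBdef
  have hMA : M * A = 1 := by
    ext ⟨a, b⟩ ⟨c, d⟩
    show (M * A) (a, b) (c, d) = _
    rw [Matrix.mul_apply]
    simp only [hMdef, hAdef, Matrix.mul_apply, Matrix.one_apply, Fintype.sum_prod_type]
    calc ∑ x, ∑ y, R a b x y * ∑ m, ∑ i, g m x * R i y m d * gt i c
        = ∑ x, ∑ y, ∑ m, ∑ i, R a b x y * R i y m d * g m x * gt i c := by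
          simp only [Finset.mul_sum]
          exact sum_congr rfl fun _ _ => sum_congr rfl fun _ _ => sum_congr rfl fun _ _ =>
            sum_congr rfl fun _ _ => by ring
      _ = ∑ i, ∑ x, ∑ y, ∑ m, R a b x y * R i y m d * g m x * gt i c := rot4 _
      _ = ∑ i, (g i a * if b = d then (1:ℂ) else 0) * gt i c := by
          refine sum_congr rfl fun i _ => ?_
          rw [hc1 i a b d]
          simp only [Finset.sum_mul]
      _ = (if b = d then (1:ℂ) else 0) * ∑ i, g i a * gt i c := by
          rw [Finset.mul_sum]
          exact sum_congr rfl fun i _ => by ring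
      _ = (if (a, b) = (c, d) then (1:ℂ) else 0) := by
          rw [hg' a c]
          by_cases h1 : a = c <;> by_cases h2 : b = d <;> simp [h1, h2, Prod.ext_iff]
  have hAM : A * M = 1 := by
    ext ⟨a, b⟩ ⟨c, d⟩
    show (A * M) (a, b) (c, d) = _
    rw [Matrix.mul_apply]
    simp only [hMdef, hAdef, Matrix.mul_apply, Matrix.one_apply, Fintype.sum_prod_type]
    calc ∑ x, ∑ y, (∑ m, ∑ n, g m a * R n b m y * gt n x) * R x y c d
        = ∑ x, ∑ y, ∑ m, ∑ n, g m a * (gt n x * R n b m y * R x y c d) := by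
          simp only [Finset.sum_mul]
          exact sum_congr rfl fun _ _ => sum_congr rfl fun _ _ => sum_congr rfl fun _ _ =>
            sum_congr rfl fun _ _ => by ring
      _ = ∑ n, ∑ x, ∑ y, ∑ m, g m a * (gt n x * R n b m y * R x y c d) := rot4 _
      _ = ∑ m, ∑ n, ∑ x, ∑ y, g m a * (gt n x * R n b m y * R x y c d) := rot4 _
      _ = ∑ m, g m a * ((if b = d then (1:ℂ) else 0) * gt m c) := by
          refine sum_congr rfl fun m _ => ?_
          rw [hc2 b d m c]
          simp only [Finset.mul_sum]
      _ = (if b = d then (1:ℂ) else 0) * ∑ m, g m a * gt m c := by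
          rw [Finset.mul_sum]
          exact sum_congr rfl fun m _ => by ring
      _ = (if (a, b) = (c, d) then (1:ℂ) else 0) := by
          rw [hg' a c]
          by_cases h1 : a = c <;> by_cases h2 : b = d <;> simp [h1, h2, Prod.ext_iff]
  have hMB : M * B = 1 := by
    ext ⟨a, b⟩ ⟨c, d⟩
    show (M * B) (a, b) (c, d) = _
    rw [Matrix.mul_apply]
    simp only [hMdef, hBdef, Matrix.mul_apply, Matrix.one_apply, Fintype.sum_prod_type]
    calc ∑ x, ∑ y, R a b x y * ∑ m, ∑ n, g y m * R x n c m * gt d n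
        = ∑ x, ∑ y, ∑ m, ∑ n, (R a b x y * R x n c m * g y m) * gt d n := by
          simp only [Finset.mul_sum]
          exact sum_congr rfl fun _ _ => sum_congr rfl fun _ _ => sum_congr rfl fun _ _ =>
            sum_congr rfl fun _ _ => by ring
      _ = ∑ n, ∑ x, ∑ y, ∑ m, (R a b x y * R x n c m * g y m) * gt d n := rot4 _
      _ = ∑ n, (g b n * if a = c then (1:ℂ) else 0) * gt d n := by
          refine sum_congr rfl fun n _ => ?_
          rw [hc3 b n a c]
          simp only [Finset.sum_mul]
      _ = (if a = c then (1:ℂ) else 0) * ∑ n, g b n * gt d n := by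
          rw [Finset.mul_sum]
          exact sum_congr rfl fun n _ => by ring
      _ = (if (a, b) = (c, d) then (1:ℂ) else 0) := by
          rw [hg b d]
          by_cases h1 : a = c <;> by_cases h2 : b = d <;> simp [h1, h2, Prod.ext_iff]
  refine ⟨hMA, hAM, ?_⟩
  calc A = A * (M * B) := by rw [hMB, mul_one]
    _ = (A * M) * B := (mul_assoc _ _ _).symm
    _ = B := by rw [hAM, one_mul]
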